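/- (Energy identity for the HDG deformation error equations, abstract version) Suppose bilinear forms satisfy the discrete error equations: (ε_σ, ψ) − (ε_V, div ψ) + ⟨ε_V̂, ψ n⟩ = −(I_σ, ψ), (ε_σ, ∇w) − ⟨ε_σ̂ n, w⟩ = 0 for all discrete ψ, w, with ε_σ̂ n = ε_σ n + τ(ε_V − ε_V̂), and boundary conditions ⟨ε_σ̂ n, μ⟩ = 0 on interior faces, ⟨ε_σ̂ n, μ⟩ = ⟨δG, μ⟩ on Γ_N, ⟨ε_V̂, μ⟩ = ⟨δg, μ⟩ on Γ_D. Then choosing ψ = ε_σ and w = ε_V and integrating by parts yields ‖ε_σ‖² + ‖τ^{1/2}(ε_V − ε_V̂)‖² + ⟨δg, ε_σ̂ n⟩_{Γ_D} + ⟨δG, ε_V̂⟩_{Γ_N} = −(I_σ, ε_σ). -/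

import Mathlib

/-- Abstract energy identity for the HDG deformation error equations (Lemma 5.3):
testing the discrete error equations with `ψ = ε_σ`, `w = ε_V` and integrating by
parts yields
`‖ε_σ‖² + τ‖ε_V − ε_V̂‖² + ⟨δg, ε_σ̂ n⟩_{Γ_D} + ⟨δG, ε_V̂⟩_{Γ_N} = −(I_σ, ε_σ)`.
Here `Z`, `W`, `B` are the (finite-dimensional, discrete) tensor, vector and face
spaces, `dv`/`gr` are the divergence/gradient, `nt` the normal trace `ψ ↦ ψ n`,
`tr` the trace `w ↦ w|_faces`, and `PI`, `PN`, `PD` the (self-adjoint) restrictions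
to interior faces, `Γ_N` and `Γ_D`, which decompose the face inner product. -/
theorem stmt15 {Z W B : Type*}
    [NormedAddCommGroup Z] [InnerProductSpace ℝ Z]
    [NormedAddCommGroup W] [InnerProductSpace ℝ W]
    [NormedAddCommGroup B] [InnerProductSpace ℝ B]
    (dv : Z →ₗ[ℝ] W) (gr : W →ₗ[ℝ] Z) (nt : Z →ₗ[ℝ] B) (tr : W →ₗ[ℝ] B)
    (PI PN PD : B →ₗ[ℝ] B)
    (hsplit : ∀ u v : B, (inner ℝ u v : ℝ)
        = (inner ℝ (PI u) v : ℝ) + (inner ℝ (PN u) v : ℝ) + (inner ℝ (PD u) v : ℝ))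
    (hPIsym : ∀ u v : B, (inner ℝ (PI u) v : ℝ) = (inner ℝ u (PI v) : ℝ))
    (hPNsym : ∀ u v : B, (inner ℝ (PN u) v : ℝ) = (inner ℝ u (PN v) : ℝ))
    (hPDsym : ∀ u v : B, (inner ℝ (PD u) v : ℝ) = (inner ℝ u (PD v) : ℝ))
    (hibp : ∀ (ψ : Z) (w : W),
        (inner ℝ (gr w) ψ : ℝ) + (inner ℝ w (dv ψ) : ℝ) = (inner ℝ (tr w) (nt ψ) : ℝ))
    (τ : ℝ) (hτ : 0 < τ)
    (εσ Iσ : Z) (εV : W) (εVhat δG δg εσhat : B)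
    (hflux : εσhat = nt εσ + τ • (tr εV - εVhat))
    (e1 : ∀ ψ : Z, (inner ℝ εσ ψ : ℝ) - (inner ℝ εV (dv ψ) : ℝ) + (inner ℝ εVhat (nt ψ) : ℝ)
        = -(inner ℝ Iσ ψ : ℝ))
    (e2 : ∀ w : W, (inner ℝ εσ (gr w) : ℝ) - (inner ℝ εσhat (tr w) : ℝ) = 0)
    (e3 : ∀ μ : B, (inner ℝ (PI εσhat) μ : ℝ) = 0)
    (e4 : ∀ μ : B, (inner ℝ (PN εσhat) μ : ℝ) = (inner ℝ (PN δG) μ : ℝ))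
    (e5 : ∀ μ : B, (inner ℝ (PD εVhat) μ : ℝ) = (inner ℝ (PD δg) μ : ℝ)) :
    ‖εσ‖^2 + τ * ‖tr εV - εVhat‖^2
      + (inner ℝ (PD δg) εσhat : ℝ) + (inner ℝ (PN δG) εVhat : ℝ)
      = -(inner ℝ Iσ εσ : ℝ) := by

  set e : B := tr εV - εVhat with he
  have hnt : nt εσ = εσhat - τ • e := by rw [hflux]; abel
  have h1 := e1 εσ
  have h2 := e2 εV
  have hib := hibp εσ εV
  have hsym : (inner ℝ εσ (gr εV) : ℝ) = (inner ℝ (gr εV) εσ : ℝ) := real_inner_comm _ _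
  have E1 : (inner ℝ εVhat (nt εσ) : ℝ)
      = (inner ℝ εVhat εσhat : ℝ) - τ * (inner ℝ εVhat e : ℝ) := by
    rw [hnt, inner_sub_right, real_inner_smul_right]
  have E2 : (inner ℝ (tr εV) (nt εσ) : ℝ)
      = (inner ℝ (tr εV) εσhat : ℝ) - τ * (inner ℝ (tr εV) e : ℝ) := by
    rw [hnt, inner_sub_right, real_inner_smul_right]
  have Ee : (inner ℝ (tr εV) e : ℝ) - (inner ℝ εVhat e : ℝ) = ‖e‖^2 := by
    rw [← inner_sub_left, ← he, real_inner_self_eq_norm_sq]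
  have EX : (inner ℝ εσhat (tr εV) : ℝ) = (inner ℝ (tr εV) εσhat : ℝ) := real_inner_comm _ _
  have hS : (inner ℝ εσ εσ : ℝ) = ‖εσ‖^2 := real_inner_self_eq_norm_sq _
  have Esub : (inner ℝ (tr εV) εσhat : ℝ) - (inner ℝ εVhat εσhat : ℝ)
      = (inner ℝ e εσhat : ℝ) := by rw [he, inner_sub_left]
  -- boundary splitting
  have hb : (inner ℝ εVhat εσhat : ℝ)
      = (inner ℝ (PD δg) εσhat : ℝ) + (inner ℝ (PN δG) εVhat : ℝ) := by
    have h0 : (inner ℝ εVhat εσhat : ℝ) = (inner ℝ εσhat εVhat : ℝ) := real_inner_comm _ _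
    rw [h0, hsplit εσhat εVhat, e3 εVhat, e4 εVhat]
    have hPD : (inner ℝ (PD εσhat) εVhat : ℝ) = (inner ℝ (PD δg) εσhat : ℝ) := by
      rw [hPDsym, real_inner_comm, e5]
    rw [hPD]; ring
  -- combine
  have key : ‖εσ‖^2 + τ * ‖e‖^2 + (inner ℝ εVhat εσhat : ℝ) = -(inner ℝ Iσ εσ : ℝ) := by
    nlinarith [h1, h2, hib, hsym, E1, E2, Ee, EX, hS, Esub]
  rw [hb] at key
  linarith [key]
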